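/- In the setting of the preceding decomposition (β flat, S(β) degenerate, β(X,Y) = β₁(X,Y) + 2((X,Y)v,(X,JY)v) with v light-like, ⟨v,w⟩ = −1, and the induced inner product on U₁ = U₀ ∩ L^⊥ positive definite), if s = dim π₁(S(β)) ≤ n, then the kernel N(β₁) of β₁ satisfies dim N(β₁) ≥ 2n − 2s + 2. -/

import Mathlib

open Module

lemma li_of_gram_det_ne_zero {W : Type*} [AddCommGroup W] [Module ℝ W]
    {m : ℕ} (P : LinearMap.BilinForm ℝ W) (vv : Fin m → W)
    (h : (Matrix.of fun i j => P (vv i) (vv j)).det ≠ 0) :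
    LinearIndependent ℝ vv := by
  rw [Fintype.linearIndependent_iff]
  intro g hg
  by_contra hne
  push_neg at hne
  obtain ⟨i₀, hi₀⟩ := hne
  apply h
  rw [← Matrix.exists_mulVec_eq_zero_iff]
  refine ⟨g, fun h0 => hi₀ (congrFun h0 i₀), ?_⟩
  funext i
  have : (Matrix.of fun i j => P (vv i) (vv j)).mulVec g i
      = P (vv i) (∑ j, g j • vv j) := by
    simp [Matrix.mulVec, dotProduct, map_sum, map_smul, smul_eq_mul, mul_comm]
  rw [this, hg]
  simp

set_option maxHeartbeats 1000000 in
/-- Moore-type lemma for "Hermitian-flat" bilinear maps with positive definite metric. -/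
lemma moore_key {V W : Type*} [AddCommGroup V] [Module ℝ V] [FiniteDimensional ℝ V]
    [AddCommGroup W] [Module ℝ W] [FiniteDimensional ℝ W]
    (A : V →ₗ[ℝ] V →ₗ[ℝ] W) (P : LinearMap.BilinForm ℝ W)
    (W₀ : Submodule ℝ W)
    (hmem : ∀ X Y : V, A X Y ∈ W₀)
    (hpos : ∀ z ∈ W₀, z ≠ 0 → 0 < P z z)
    (hsymm : ∀ u u' : W, P u u' = P u' u)
    (hF1 : ∀ X Y Z T : V, P (A X Y) (A Z T) = P (A X Z) (A Y T)) :
    ∃ X₀ : V, (⨅ X : V, LinearMap.ker (A X)) = LinearMap.ker (A X₀) := by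
  classical
  -- choose X₀ maximizing the rank of A X₀
  obtain ⟨X₀, hX₀⟩ : ∃ X₀ : V, ∀ X : V,
      finrank ℝ (LinearMap.range (A X)) ≤ finrank ℝ (LinearMap.range (A X₀)) := by
    set S : Set ℕ := Set.range (fun X : V => finrank ℝ (LinearMap.range (A X))) with hS
    have hne : S.Nonempty := ⟨_, ⟨(0 : V), rfl⟩⟩
    have hbd : BddAbove S := by
      refine ⟨finrank ℝ W, ?_⟩
      rintro _ ⟨X, rfl⟩
      exact Submodule.finrank_le _
    obtain ⟨X₀, hX₀⟩ := Nat.sSup_mem hne hbd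
    refine ⟨X₀, fun X => ?_⟩
    have h2 : finrank ℝ (LinearMap.range (A X₀)) = sSup S := hX₀
    exact le_trans (le_csSup hbd ⟨X, rfl⟩) (le_of_eq h2.symm)
  refine ⟨X₀, le_antisymm (iInf_le _ X₀) (le_iInf fun X => ?_)⟩
  intro Y hY
  rw [LinearMap.mem_ker] at hY ⊢
  -- key step : A Y Y = 0
  have hDY : A Y Y = 0 := by
    by_contra hDYne
    set r := finrank ℝ (LinearMap.range (A X₀)) with hr
    set b := Module.finBasis ℝ ↥(LinearMap.range (A X₀)) with hb
    choose c hc using fun i : Fin r => LinearMap.mem_range.mp (Submodule.coe_mem (b i))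
    -- orthogonality of A Y Y to the range of A X₀
    have horth : ∀ T : V, P (A X₀ T) (A Y Y) = 0 := by
      intro T
      rw [hF1 X₀ T Y Y, hY]
      simp
    -- families
    set xx : Fin (r+1) → W := Fin.snoc (fun j => A X₀ (c j)) (A Y Y) with hxx
    set yy : Fin (r+1) → W := Fin.snoc (fun j => A Y (c j)) 0 with hyy
    set M : ℝ → Matrix (Fin (r+1)) (Fin (r+1)) ℝ :=
      fun t => Matrix.of fun i j => P (xx i + t • yy i) (xx j + t • yy j) with hM
    -- all xx i, yy i are in W₀
    have hxxW : ∀ i, xx i ∈ W₀ := by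
      intro i
      refine Fin.lastCases ?_ ?_ i <;> simp [hxx, Fin.snoc_last, Fin.snoc_castSucc, hmem]
    -- the matrix at 0 is nonsingular
    have hM0 : (M 0).det ≠ 0 := by
      intro hdet
      obtain ⟨g, hg0, hmul⟩ := Matrix.exists_mulVec_eq_zero_iff.mpr hdet
      set z : W := ∑ i, g i • xx i with hz
      have hzW : z ∈ W₀ := Submodule.sum_mem _ fun i _ => Submodule.smul_mem _ _ (hxxW i)
      have hPz : P z z = 0 := by
        have : P z z = ∑ i, g i * ((M 0).mulVec g i) := by
          simp only [hz, hM, Matrix.mulVec, dotProduct, Matrix.of_apply]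
          rw [LinearMap.BilinForm.sum_left]
          refine Finset.sum_congr rfl fun i _ => ?_
          rw [LinearMap.BilinForm.smul_left, LinearMap.BilinForm.sum_right]
          simp [LinearMap.BilinForm.smul_right, mul_comm, Finset.mul_sum, mul_assoc, mul_left_comm]
        rw [this, hmul]
        simp
      have hz0 : z = 0 := by
        by_contra hzne
        exact absurd hPz (ne_of_gt (hpos z hzW hzne))
      -- deduce g = 0
      have hsum : (∑ j : Fin r, g j.castSucc • A X₀ (c j)) + g (Fin.last r) • A Y Y = 0 := by
        have h0 := hz0
        rw [hz, Fin.sum_univ_castSucc] at h0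
        simp only [hxx, Fin.snoc_castSucc, Fin.snoc_last] at h0
        exact h0
      have hglast : g (Fin.last r) = 0 := by
        have h1 : P (A Y Y) ((∑ j : Fin r, g j.castSucc • A X₀ (c j)) + g (Fin.last r) • A Y Y)
            = g (Fin.last r) * P (A Y Y) (A Y Y) := by
          rw [map_add, LinearMap.BilinForm.sum_right]
          have : ∀ j : Fin r, P (A Y Y) (g j.castSucc • A X₀ (c j)) = 0 := by
            intro j
            rw [LinearMap.BilinForm.smul_right, hsymm (A Y Y) (A X₀ (c j)), horth]
            ring
          rw [Finset.sum_congr rfl fun j _ => this j]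
          simp [LinearMap.BilinForm.smul_right]
        rw [hsum] at h1
        simp at h1
        rcases h1 with h1 | h1
        · exact h1
        · exact absurd h1 (ne_of_gt (hpos _ (hmem Y Y) hDYne))
      have hgj : ∀ j : Fin r, g j.castSucc = 0 := by
        have hsum2 : (∑ j : Fin r, g j.castSucc • (b j : W)) = 0 := by
          have : (∑ j : Fin r, g j.castSucc • A X₀ (c j)) = 0 := by
            rw [hglast] at hsum; simpa using hsum
          simpa [hc] using this
        have hsum3 : (∑ j : Fin r, g j.castSucc • b j) = (0 : ↥(LinearMap.range (A X₀))) := by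
          apply Subtype.ext
          push_cast
          simpa using hsum2
        exact fun j => Fintype.linearIndependent_iff.mp b.linearIndependent _ hsum3 j
      apply hg0
      funext i
      refine Fin.lastCases ?_ ?_ i
      · exact hglast
      · exact hgj
    -- continuity of the Gram determinant
    have hcont : Continuous fun t : ℝ => (M t).det := by
      apply Continuous.matrix_det
      apply continuous_matrix
      intro i j
      have : (fun t : ℝ => M t i j) = fun t => P (xx i) (xx j) + t * P (xx i) (yy j)
          + t * P (yy i) (xx j) + t * t * P (yy i) (yy j) := by
        funext t
        simp only [hM, Matrix.of_apply, map_add, LinearMap.BilinForm.smul_left,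
          LinearMap.add_apply, LinearMap.smul_apply, smul_eq_mul, map_smul]
        ring
      rw [this]
      fun_prop
    -- find t ≠ 0 where the determinant is nonzero
    obtain ⟨t, htM, ht0⟩ : ∃ t : ℝ, (M t).det ≠ 0 ∧ t ≠ 0 := by
      have h1 : ∀ᶠ t : ℝ in nhdsWithin 0 {(0:ℝ)}ᶜ, (M t).det ≠ 0 :=
        (hcont.continuousAt.eventually_ne hM0).filter_mono nhdsWithin_le_nhds
      have h2 : ∀ᶠ t : ℝ in nhdsWithin 0 {(0:ℝ)}ᶜ, t ≠ 0 := by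
        filter_upwards [self_mem_nhdsWithin] with t ht using ht
      exact (h1.and h2).exists
    -- the vectors xx i + t • yy i are independent and live in range (A (X₀ + t • Y))
    have hli : LinearIndependent ℝ (fun i => xx i + t • yy i) :=
      li_of_gram_det_ne_zero P _ htM
    have hmemrange : ∀ i, xx i + t • yy i ∈ LinearMap.range (A (X₀ + t • Y)) := by
      intro i
      refine Fin.lastCases ?_ ?_ i
      · -- last : A Y Y
        simp only [hxx, hyy, Fin.snoc_last, smul_zero, add_zero]
        have hval : A (X₀ + t • Y) Y = t • A Y Y := by
          rw [map_add, map_smul]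
          simp [hY]
        refine ⟨t⁻¹ • Y, ?_⟩
        rw [map_smul, hval, smul_smul, inv_mul_cancel₀ ht0, one_smul]
      · intro j
        simp only [hxx, hyy, Fin.snoc_castSucc]
        refine ⟨c j, ?_⟩
        rw [map_add, map_smul]
        simp
    have hcard : r + 1 ≤ finrank ℝ (LinearMap.range (A (X₀ + t • Y))) := by
      have hspan : Submodule.span ℝ (Set.range fun i => xx i + t • yy i)
          ≤ LinearMap.range (A (X₀ + t • Y)) := by
        rw [Submodule.span_le]
        rintro _ ⟨i, rfl⟩
        exact hmemrange i
      have h1 := finrank_span_eq_card (R := ℝ) hli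
      have h2 := Submodule.finrank_mono hspan
      rw [h1] at h2
      simpa using h2
    have := hX₀ (X₀ + t • Y)
    omega
  -- conclude A X Y = 0
  have hPXY : P (A X Y) (A X Y) = 0 := by
    rw [hF1 X Y X Y, hDY]
    simp
  by_contra hne
  exact absurd hPXY (ne_of_gt (hpos _ (hmem X Y) hne))

open Module

set_option maxHeartbeats 1000000 in
/-- In the decomposition β = β₁ + 2((X,Y)v,(X,JY)v), if s = dim π₁(S(β)) ≤ n then
dim N(β₁) ≥ 2n − 2s + 2. -/
theorem stmt_11 (n : ℕ) (V L : Type*) [AddCommGroup V] [Module ℝ V] [FiniteDimensional ℝ V]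
    [AddCommGroup L] [Module ℝ L] [FiniteDimensional ℝ L]
    (hdV : Module.finrank ℝ V = 2 * n)
    (BV : LinearMap.BilinForm ℝ V) (hVsymm : BV.IsSymm)
    (hVpos : ∀ X : V, X ≠ 0 → 0 < BV X X)
    (J : V →ₗ[ℝ] V) (hJ : J ∘ₗ J = -LinearMap.id)
    (hJiso : ∀ X Y : V, BV (J X) (J Y) = BV X Y)
    (BL : LinearMap.BilinForm ℝ L) (hLsymm : BL.IsSymm)
    (w : L) (hw : BL w w = -1)
    (hLor : ∀ x : L, BL x w = 0 → x ≠ 0 → 0 < BL x x)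
    (α : V →ₗ[ℝ] V →ₗ[ℝ] L) (hαsymm : ∀ X Y : V, α X Y = α Y X)
    (hαw : ∀ X Y : V, BL (α X Y) w = -(BV X Y))
    (β : V →ₗ[ℝ] V →ₗ[ℝ] L × L)
    (hβ : ∀ X Y : V, β X Y = (α X Y + α (J X) (J Y), α X (J Y) - α (J X) Y))
    (Bw : LinearMap.BilinForm ℝ (L × L))
    (hBw : ∀ a b : L × L, Bw a b = BL a.1 b.1 - BL a.2 b.2)
    (hflat : ∀ X Y Z T : V, Bw (β X Y) (β Z T) = Bw (β X T) (β Z Y))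
    (Sβ : Submodule ℝ (L × L))
    (hSβ : Sβ = Submodule.span ℝ {z : L × L | ∃ X Y : V, z = β X Y})
    (hdeg : Sβ ⊓ Bw.orthogonal Sβ ≠ ⊥)
    (v : L) (hv0 : v ≠ 0) (hvlight : BL v v = 0) (hvw : BL v w = -1)
    (hvrad : Sβ ⊓ Bw.orthogonal Sβ =
      (Submodule.span ℝ {v}).prod (Submodule.span ℝ {v}))
    (hU₁pos : ∀ x : L, x ∈ Submodule.map (LinearMap.fst ℝ L L) Sβ →
      x ∈ BL.orthogonal (Submodule.span ℝ {v, w}) → x ≠ 0 → 0 < BL x x)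
    (β₁ : V →ₗ[ℝ] V →ₗ[ℝ] L × L)
    (hβ₁comp : ∀ X Y : V, (β₁ X Y).1 ∈ BL.orthogonal (Submodule.span ℝ {v, w}) ∧
      (β₁ X Y).2 ∈ BL.orthogonal (Submodule.span ℝ {v, w}))
    (hdecomp : ∀ X Y : V, β X Y = β₁ X Y + ((2 * BV X Y) • v, (2 * BV X (J Y)) • v))
    (s : ℕ) (hs : s = Module.finrank ℝ (Submodule.map (LinearMap.fst ℝ L L) Sβ))
    (hsn : s ≤ n) :
    2 * n - 2 * s + 2 ≤ Module.finrank ℝ ↥(⨅ X : V, LinearMap.ker (β₁ X)) := by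
  classical
  -- basic symmetry facts
  have hBVs : ∀ X Y : V, BV X Y = BV Y X := fun X Y => by
    have := LinearMap.BilinForm.isSymm_def.mp hVsymm X Y; simpa using this
  have hBLs : ∀ x y : L, BL x y = BL y x := fun x y => by
    have := LinearMap.BilinForm.isSymm_def.mp hLsymm x y; simpa using this
  have hJJ : ∀ Y : V, J (J Y) = -Y := fun Y => by
    have := LinearMap.congr_fun hJ Y; simpa using this
  have hBVJ : ∀ X Y : V, BV Y (J X) = -(BV X (J Y)) := by
    intro X Y
    have h1 : BV (J Y) (J (J X)) = BV Y (J X) := hJiso Y (J X)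
    rw [hJJ X, map_neg] at h1
    rw [← h1, hBVs (J Y) X]
  -- the positive-definite form on L × L
  set P : LinearMap.BilinForm ℝ (L × L) :=
    BL.compl₁₂ (LinearMap.fst ℝ L L) (LinearMap.fst ℝ L L)
      + BL.compl₁₂ (LinearMap.snd ℝ L L) (LinearMap.snd ℝ L L) with hPdef
  have hP : ∀ a b : L × L, P a b = BL a.1 b.1 + BL a.2 b.2 := fun a b => by
    simp [hPdef, LinearMap.compl₁₂_apply]
  -- v is in U₀
  have hvv : (v, v) ∈ Sβ := by
    have h1 : (v, v) ∈ (Submodule.span ℝ {v}).prod (Submodule.span ℝ {v}) :=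
      ⟨Submodule.mem_span_singleton_self v, Submodule.mem_span_singleton_self v⟩
    rw [← hvrad] at h1
    exact h1.1
  have hvU₀ : v ∈ Submodule.map (LinearMap.fst ℝ L L) Sβ := ⟨(v, v), hvv, rfl⟩
  have hβmem : ∀ X Y : V, β X Y ∈ Sβ := fun X Y =>
    hSβ ▸ Submodule.subset_span ⟨X, Y, rfl⟩
  -- components of β₁ from the decomposition
  have hcomp1 : ∀ X Y : V, (β₁ X Y).1 = (β X Y).1 - (2 * BV X Y) • v := by
    intro X Y
    have h := congrArg Prod.fst (hdecomp X Y)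
    simp only [Prod.fst_add] at h
    rw [h]; abel
  have hcomp2 : ∀ X Y : V, (β₁ X Y).2 = (β X Y).2 - (2 * BV X (J Y)) • v := by
    intro X Y
    have h := congrArg Prod.snd (hdecomp X Y)
    simp only [Prod.snd_add] at h
    rw [h]; abel
  have hfstmem : ∀ X Y : V, (β₁ X Y).1 ∈ Submodule.map (LinearMap.fst ℝ L L) Sβ := by
    intro X Y
    rw [hcomp1]
    exact Submodule.sub_mem _ ⟨β X Y, hβmem X Y, rfl⟩
      (Submodule.smul_mem _ _ hvU₀)
  -- the J-swap identity  β₁ X (J Y) = ((β₁ X Y).2, -(β₁ X Y).1)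
  have hswap : ∀ X Y : V, β₁ X (J Y) = ((β₁ X Y).2, -(β₁ X Y).1) := by
    intro X Y
    have hbJ : β X (J Y) = ((β X Y).2, -(β X Y).1) := by
      rw [hβ X (J Y), hβ X Y]
      have e1 : α (J X) (J (J Y)) = -(α (J X) Y) := by rw [hJJ Y, map_neg]
      have e2 : α X (J (J Y)) = -(α X Y) := by rw [hJJ Y, map_neg]
      rw [e1, e2]
      apply Prod.ext <;> simp <;> abel
    apply Prod.ext
    · rw [hcomp1 X (J Y), hbJ, hcomp2 X Y]
    · rw [hcomp2 X (J Y), hbJ, hcomp1 X Y]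
      have e3 : BV X (J (J Y)) = -(BV X Y) := by rw [hJJ Y, map_neg]
      rw [e3]
      simp
      abel
  -- the conjugation identity  β₁ Y X = ((β₁ X Y).1, -(β₁ X Y).2)
  have hconj : ∀ X Y : V, β₁ Y X = ((β₁ X Y).1, -(β₁ X Y).2) := by
    intro X Y
    apply Prod.ext
    · rw [hcomp1 Y X, hcomp1 X Y]
      have h1 : (β Y X).1 = (β X Y).1 := by
        rw [hβ X Y, hβ Y X]
        simp only
        rw [hαsymm Y X, hαsymm (J Y) (J X)]
      rw [h1, hBVs Y X]
    · rw [hcomp2 Y X, hcomp2 X Y]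
      have h2 : (β Y X).2 = -((β X Y).2) := by
        rw [hβ X Y, hβ Y X]
        simp only
        rw [hαsymm Y (J X), hαsymm (J Y) X]
        abel
      rw [h2, hBVJ X Y]
      simp
      abel
  -- orthogonality facts
  have hvmem : v ∈ Submodule.span ℝ ({v, w} : Set L) :=
    Submodule.subset_span (Set.mem_insert _ _)
  have horthv : ∀ (x : L), x ∈ BL.orthogonal (Submodule.span ℝ ({v, w} : Set L)) →
      BL v x = 0 ∧ BL x v = 0 := by
    intro x hx
    have h1 := hx v hvmem
    exact ⟨h1, by rw [hBLs]; exact h1⟩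
  -- flatness for β₁ w.r.t. Bw
  have hkey : ∀ X Y Z T : V, Bw (β X Y) (β Z T) = Bw (β₁ X Y) (β₁ Z T) := by
    intro X Y Z T
    rw [hdecomp X Y, hdecomp Z T]
    rw [hBw, hBw]
    simp only [Prod.fst_add, Prod.snd_add]
    have o1 := (horthv _ (hβ₁comp X Y).1).2
    have o2 := (horthv _ (hβ₁comp X Y).2).2
    have o3 := (horthv _ (hβ₁comp Z T).1).1
    have o4 := (horthv _ (hβ₁comp Z T).2).1
    simp only [map_add, LinearMap.add_apply, map_smul, LinearMap.smul_apply, smul_eq_mul,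
      o1, o2, o3, o4, hvlight]
    ring
  have hflat₁ : ∀ X Y Z T : V, Bw (β₁ X Y) (β₁ Z T) = Bw (β₁ X T) (β₁ Z Y) := by
    intro X Y Z T
    rw [← hkey X Y Z T, ← hkey X T Z Y, hflat]
  -- the F1 identity for P
  have hPBw : ∀ X Y Z T : V, P (β₁ X Y) (β₁ Z T) = Bw (β₁ X Y) (β₁ T Z) := by
    intro X Y Z T
    rw [hP, hBw, hconj Z T]
    simp only [map_neg]
    ring
  have hF1 : ∀ X Y Z T : V, P (β₁ X Y) (β₁ Z T) = P (β₁ X Z) (β₁ Y T) := by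
    intro X Y Z T
    rw [hPBw X Y Z T, hflat₁ X Y T Z, ← hPBw X Z Y T]
  -- membership in W₀
  set U₁' : Submodule ℝ L := Submodule.map (LinearMap.fst ℝ L L) Sβ
      ⊓ BL.orthogonal (Submodule.span ℝ ({v, w} : Set L)) with hU₁'def
  set W₀ : Submodule ℝ (L × L) := U₁'.prod U₁' with hW₀def
  have hmemW₀ : ∀ X Y : V, β₁ X Y ∈ W₀ := by
    intro X Y
    refine ⟨⟨hfstmem X Y, (hβ₁comp X Y).1⟩, ⟨?_, (hβ₁comp X Y).2⟩⟩
    have h1 : (β₁ X (J Y)).1 = (β₁ X Y).2 := by rw [hswap X Y]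
    rw [← h1]
    exact hfstmem X (J Y)
  -- positivity on W₀
  have hposW₀ : ∀ z ∈ W₀, z ≠ 0 → 0 < P z z := by
    rintro ⟨z1, z2⟩ hz hzne
    obtain ⟨h1, h2⟩ := hz
    have k1 : 0 ≤ BL z1 z1 := by
      rcases eq_or_ne z1 0 with h | h
      · simp [h]
      · exact le_of_lt (hU₁pos z1 h1.1 h1.2 h)
    have k2 : 0 ≤ BL z2 z2 := by
      rcases eq_or_ne z2 0 with h | h
      · simp [h]
      · exact le_of_lt (hU₁pos z2 h2.1 h2.2 h)
    have hne : z1 ≠ 0 ∨ z2 ≠ 0 := by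
      by_contra hcon
      push_neg at hcon
      exact hzne (Prod.ext hcon.1 hcon.2)
    rw [hP]
    rcases hne with h | h
    · have := hU₁pos z1 h1.1 h1.2 h
      linarith
    · have := hU₁pos z2 h2.1 h2.2 h
      linarith
  have hPsymm : ∀ u u' : L × L, P u u' = P u' u := by
    intro u u'
    rw [hP, hP, hBLs u.1 u'.1, hBLs u.2 u'.2]
  -- apply the key lemma
  obtain ⟨X₀, hX₀⟩ := moore_key β₁ P W₀ hmemW₀ hposW₀ hPsymm hF1
  rw [hX₀]
  -- dimension count
  have hrn := LinearMap.finrank_range_add_finrank_ker (β₁ X₀)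
  rw [hdV] at hrn
  have hrange : LinearMap.range (β₁ X₀) ≤ W₀ := by
    rintro u ⟨Y, rfl⟩
    exact hmemW₀ X₀ Y
  have hfr : finrank ℝ (LinearMap.range (β₁ X₀)) ≤ finrank ℝ W₀ :=
    Submodule.finrank_mono hrange
  -- finrank W₀ ≤ 2 * finrank U₁'
  have hWdim : finrank ℝ W₀ ≤ finrank ℝ U₁' + finrank ℝ U₁' := by
    rw [hW₀def, LinearMap.prod_eq_sup_map]
    have h1 := Submodule.finrank_sup_add_finrank_inf_eq
      (U₁'.map (LinearMap.inl ℝ L L)) (U₁'.map (LinearMap.inr ℝ L L))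
    have h2 := Submodule.finrank_map_le (LinearMap.inl ℝ L L) U₁'
    have h3 := Submodule.finrank_map_le (LinearMap.inr ℝ L L) U₁'
    omega
  -- finrank U₁' + 1 ≤ s
  have hU₁dim : finrank ℝ U₁' + 1 ≤ s := by
    have hle : U₁' ≤ (Submodule.map (LinearMap.fst ℝ L L) Sβ) ⊓ LinearMap.ker (BL w) := by
      rintro x ⟨hx1, hx2⟩
      refine ⟨hx1, ?_⟩
      show BL w x = 0
      exact hx2 w (Submodule.subset_span (Set.mem_insert_iff.mpr (Or.inr rfl)))
    have hlt : (Submodule.map (LinearMap.fst ℝ L L) Sβ) ⊓ LinearMap.ker (BL w)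
        < Submodule.map (LinearMap.fst ℝ L L) Sβ := by
      refine lt_of_le_of_ne inf_le_left fun h => ?_
      have : v ∈ (Submodule.map (LinearMap.fst ℝ L L) Sβ) ⊓ LinearMap.ker (BL w) := by
        rw [h]; exact hvU₀
      have hv2 : BL w v = 0 := this.2
      rw [hBLs w v, hvw] at hv2
      norm_num at hv2
    have h4 := Submodule.finrank_lt_finrank_of_lt hlt
    have h5 := Submodule.finrank_mono hle
    omega
  omega
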